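/- Let A = {(x,y) ∈ ℝ² : (r−δ)² ≤ x²+y² ≤ (r+δ)²} with 0 < δ < r. If F : A → ℝ is constant on every circle of radius r contained in A, then F is constant on A. -/
import Mathlib

/-- Any two circles of radius `r` whose centers are at distance `≤ 2r` intersect. -/
lemma circles_intersect (r : ℝ) (hr : 0 < r) (c c' : ℝ × ℝ)
    (hcc : (c'.1 - c.1)^2 + (c'.2 - c.2)^2 ≤ 4 * r^2) :
    ∃ x : ℝ × ℝ, (x.1 - c.1)^2 + (x.2 - c.2)^2 = r^2 ∧
      (x.1 - c'.1)^2 + (x.2 - c'.2)^2 = r^2 := by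
  by_cases h0 : (c'.1 - c.1)^2 + (c'.2 - c.2)^2 = 0
  · have h1 : c'.1 = c.1 := by nlinarith [sq_nonneg (c'.1 - c.1), sq_nonneg (c'.2 - c.2)]
    have h2 : c'.2 = c.2 := by nlinarith [sq_nonneg (c'.1 - c.1), sq_nonneg (c'.2 - c.2)]
    exact ⟨(c.1 + r, c.2), by ring_nf, by rw [h1, h2]; ring_nf⟩
  · set D := Real.sqrt ((c'.1 - c.1)^2 + (c'.2 - c.2)^2) with hD
    have hD2 : D^2 = (c'.1 - c.1)^2 + (c'.2 - c.2)^2 := Real.sq_sqrt (by positivity)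
    set h := Real.sqrt (r^2 - ((c'.1 - c.1)^2 + (c'.2 - c.2)^2)/4) with hh
    have hh2 : h^2 = r^2 - ((c'.1 - c.1)^2 + (c'.2 - c.2)^2)/4 :=
      Real.sq_sqrt (by nlinarith)
    set k := h / D with hk
    have hk2 : k^2 * ((c'.1 - c.1)^2 + (c'.2 - c.2)^2) =
        r^2 - ((c'.1 - c.1)^2 + (c'.2 - c.2)^2)/4 := by
      rw [hk, div_pow, hD2, div_mul_cancel₀ _ h0]; exact hh2
    refine ⟨((c.1 + c'.1)/2 - k * (c'.2 - c.2), (c.2 + c'.2)/2 + k * (c'.1 - c.1)), ?_, ?_⟩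
    · linear_combination hk2
    · linear_combination hk2


set_option maxHeartbeats 800000 in
lemma circle_sub_annulus (r δ : ℝ) (hδ : 0 < δ) (hδr : δ < r) (c : ℝ × ℝ)
    (hc : c.1^2 + c.2^2 ≤ δ^2) :
    {p : ℝ × ℝ | (p.1 - c.1)^2 + (p.2 - c.2)^2 = r^2} ⊆
      {p : ℝ × ℝ | (r - δ)^2 ≤ p.1^2 + p.2^2 ∧ p.1^2 + p.2^2 ≤ (r + δ)^2} := by
  intro q hq
  simp only [Set.mem_setOf_eq] at hq ⊢
  set m := Real.sqrt (q.1^2 + q.2^2) with hm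
  set e := Real.sqrt (c.1^2 + c.2^2) with he
  have hm2 : m^2 = q.1^2 + q.2^2 := Real.sq_sqrt (by positivity)
  have he2 : e^2 = c.1^2 + c.2^2 := Real.sq_sqrt (by positivity)
  have hm0 : 0 ≤ m := Real.sqrt_nonneg _
  have he0 : 0 ≤ e := Real.sqrt_nonneg _
  have heδ : e ≤ δ := by nlinarith
  have hcs : (q.1 * c.1 + q.2 * c.2)^2 ≤ m^2 * e^2 := by
    rw [hm2, he2]; nlinarith [sq_nonneg (q.1 * c.2 - q.2 * c.1)]
  have hs1 : q.1 * c.1 + q.2 * c.2 ≤ m * e := by nlinarith [mul_nonneg hm0 he0]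
  have hs2 : -(m * e) ≤ q.1 * c.1 + q.2 * c.2 := by nlinarith [mul_nonneg hm0 he0]
  have hr0 : (0:ℝ) < r := hδ.trans hδr
  have key1 : (m - e)^2 ≤ r^2 := by nlinarith [hs1, hm2, he2, hq]
  have key2 : r^2 ≤ (m + e)^2 := by nlinarith [hs2, hm2, he2, hq]
  have hub : m ≤ r + e := by nlinarith [key1]
  have hlb : r - e ≤ m := by nlinarith [key2, hm0, he0]
  have hub' : m ≤ r + δ := by linarith
  have hlb' : r - δ ≤ m := by linarith
  constructor
  · rw [← hm2]
    nlinarith [mul_nonneg (by linarith : (0:ℝ) ≤ m - (r - δ)) (by linarith : (0:ℝ) ≤ m + (r - δ))]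
  · rw [← hm2]
    nlinarith [mul_nonneg (by linarith : (0:ℝ) ≤ (r + δ) - m) (by linarith : (0:ℝ) ≤ (r + δ) + m)]

set_option maxHeartbeats 800000 in
lemma exists_circle_center (r δ : ℝ) (hδ : 0 < δ) (hδr : δ < r) (p : ℝ × ℝ)
    (h1 : (r - δ)^2 ≤ p.1^2 + p.2^2) (h2 : p.1^2 + p.2^2 ≤ (r + δ)^2) :
    ∃ c : ℝ × ℝ, c.1^2 + c.2^2 ≤ δ^2 ∧ (p.1 - c.1)^2 + (p.2 - c.2)^2 = r^2 := by
  set n := Real.sqrt (p.1^2 + p.2^2) with hn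
  have hn2 : n^2 = p.1^2 + p.2^2 := Real.sq_sqrt (by positivity)
  have hn0 : 0 < n := by
    have : (0:ℝ) < (r - δ)^2 := by nlinarith
    nlinarith [Real.sqrt_nonneg (p.1^2 + p.2^2)]
  have hnlb : r - δ ≤ n := by nlinarith [Real.sqrt_nonneg (p.1^2 + p.2^2)]
  have hnub : n ≤ r + δ := by nlinarith [Real.sqrt_nonneg (p.1^2 + p.2^2)]
  refine ⟨((1 - r/n) * p.1, (1 - r/n) * p.2), ?_, ?_⟩
  · have h3 : ((1 - r/n) * p.1)^2 + ((1 - r/n) * p.2)^2 = (n - r)^2 := by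
      have : ((1 - r/n) * p.1)^2 + ((1 - r/n) * p.2)^2 = (1 - r/n)^2 * (p.1^2 + p.2^2) := by
        ring
      rw [this, ← hn2]
      field_simp
    simpa using h3.trans_le (by nlinarith : (n - r)^2 ≤ δ^2)
  · have h4 : (p.1 - (1 - r/n) * p.1)^2 + (p.2 - (1 - r/n) * p.2)^2
        = (r/n)^2 * (p.1^2 + p.2^2) := by ring
    simp only []
    rw [h4, ← hn2]
    field_simp

theorem stmt_0 (r δ : ℝ) (hδ : 0 < δ) (hδr : δ < r)
    (A : Set (ℝ × ℝ))
    (hA : A = {p : ℝ × ℝ | (r - δ)^2 ≤ p.1^2 + p.2^2 ∧ p.1^2 + p.2^2 ≤ (r + δ)^2})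
    (F : ℝ × ℝ → ℝ)
    (hF : ∀ c : ℝ × ℝ, {p : ℝ × ℝ | (p.1 - c.1)^2 + (p.2 - c.2)^2 = r^2} ⊆ A →
      ∀ p q : ℝ × ℝ, (p.1 - c.1)^2 + (p.2 - c.2)^2 = r^2 →
        (q.1 - c.1)^2 + (q.2 - c.2)^2 = r^2 → F p = F q) :
    ∀ p ∈ A, ∀ q ∈ A, F p = F q := by
  subst hA
  intro p hp q hq
  simp only [Set.mem_setOf_eq] at hp hq
  obtain ⟨cp, hcp, hpcp⟩ := exists_circle_center r δ hδ hδr p hp.1 hp.2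
  obtain ⟨cq, hcq, hqcq⟩ := exists_circle_center r δ hδ hδr q hq.1 hq.2
  obtain ⟨x, hx1, hx2⟩ := circles_intersect r (hδ.trans hδr) cp cq
    (by nlinarith [sq_nonneg (cq.1 + cp.1), sq_nonneg (cq.2 + cp.2), sq_nonneg (r - δ), sq_nonneg (r + δ)])
  have e1 := hF cp (circle_sub_annulus r δ hδ hδr cp hcp) p x hpcp hx1
  have e2 := hF cq (circle_sub_annulus r δ hδ hδr cq hcq) x q hx2 hqcq
  exact e1.trans e2
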